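/- Let G be a cograph with cotree T and x a new vertex with neighbourhood N(x) such that the root of T is mixed (i.e. some but not all vertices of G are in N(x)). Then G+x is a cograph if and only if there exists a mixed node u of T such that (1) every child of u is uniform (full or hollow with respect to N(x)), and (2) for every vertex y ∉ V(u), y ∈ N(x) if and only if the lowest common ancestor of y and u in T is a series node. -/

import Mathlib

universe u

def IsCograph {α : Type*} (G : SimpleGraph α) : Prop :=
  ¬ ∃ f : Fin 4 → α, Function.Injective f ∧
      ∀ i j : Fin 4, G.Adj (f i) (f j) ↔ (i.val + 1 = j.val ∨ j.val + 1 = i.val)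

inductive Cotree (V : Type u) : Type u where
  | leaf : V → Cotree V
  | node : Bool → List (Cotree V) → Cotree V

namespace Cotree

variable {V : Type u}

def leaves : Cotree V → List V
  | .leaf v => [v]
  | .node _ ts => ts.attach.flatMap (fun t => t.1.leaves)

decreasing_by simp_wf; have := List.sizeOf_lt_of_mem t.2; omega

def subtrees : Cotree V → List (Cotree V)
  | .leaf v => [.leaf v]
  | .node b ts => .node b ts :: ts.attach.flatMap (fun t => t.1.subtrees)

decreasing_by simp_wf; have := List.sizeOf_lt_of_mem t.2; omega

def children : Cotree V → List (Cotree V)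
  | .leaf _ => []
  | .node _ ts => ts

def isSeries : Cotree V → Prop
  | .node true _ => True
  | _ => False

def isParallel : Cotree V → Prop
  | .node false _ => True
  | _ => False

def adj : Cotree V → V → V → Prop
  | .leaf _, _, _ => False
  | .node b ts, x, y =>
      (∃ t ∈ ts.attach, adj t.1 x y) ∨
      (b = true ∧ ∃ t ∈ ts.attach, ∃ s ∈ ts.attach,
        t.1 ≠ s.1 ∧ x ∈ t.1.leaves ∧ y ∈ s.1.leaves)

decreasing_by simp_wf; have := List.sizeOf_lt_of_mem t.2; omega

def valid : Cotree V → Prop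
  | .leaf _ => True
  | .node b ts => 2 ≤ ts.length ∧ ∀ t ∈ ts.attach, valid t.1 ∧
      ∀ b' ts', t.1 = .node b' ts' → b' ≠ b

decreasing_by simp_wf; have := List.sizeOf_lt_of_mem t.2; omega

def hollow (N : Set V) (t : Cotree V) : Prop := ∀ v ∈ t.leaves, v ∉ N
def full (N : Set V) (t : Cotree V) : Prop := ∀ v ∈ t.leaves, v ∈ N
def uniform (N : Set V) (t : Cotree V) : Prop := full N t ∨ hollow N t
def mixed (N : Set V) (t : Cotree V) : Prop := ¬ uniform N t

def forced (N : Set V) : Cotree V → Prop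
  | .leaf v => v ∈ N
  | .node b ts =>
      full N (.node b ts) ∨
      (b = false ∧ ∀ t ∈ ts, ¬ hollow N t) ∨
      (b = true ∧ ∀ t ∈ ts.attach, forced N t.1)

decreasing_by simp_wf; have := List.sizeOf_lt_of_mem t.2; omega

def eligible (N : Set V) : Cotree V → Cotree V → Prop
  | .leaf v, u => u = .leaf v
  | .node b ts, u => u = .node b ts ∨
      ∃ t ∈ ts.attach, eligible N t.1 u ∧
        (b = false → ∀ s ∈ ts, s ≠ t.1 → hollow N s)

decreasing_by simp_wf; have := List.sizeOf_lt_of_mem t.2; omega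

def IsLcaLeaves (T u : Cotree V) (x y : V) : Prop :=
  u ∈ T.subtrees ∧ x ∈ u.leaves ∧ y ∈ u.leaves ∧
    ∀ c ∈ u.children, ¬ (x ∈ c.leaves ∧ y ∈ c.leaves)

def IsLcaNodeLeaf (T w u : Cotree V) (y : V) : Prop :=
  w ∈ T.subtrees ∧ u ∈ w.subtrees ∧ y ∈ w.leaves ∧
    ∀ c ∈ w.children, ¬ (u ∈ c.subtrees ∧ y ∈ c.leaves)

def graphOf (T : Cotree V) : SimpleGraph V :=
  SimpleGraph.fromRel (fun a b => T.adj a b)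

def graphPlus (T : Cotree V) (N : Set V) : SimpleGraph (Option V) :=
  SimpleGraph.fromRel (fun a b =>
    match a, b with
    | some u, some v => T.adj u v
    | none, some v => v ∈ N
    | _, _ => False)

def IsConstrainedCompletion (T : Cotree V) (Nx N' : Set V) : Prop :=
  Nx ⊆ N' ∧ (∀ v ∈ N', v ∈ T.leaves) ∧ IsCograph (graphPlus T N')

def IsMinimalConstrainedCompletion (T : Cotree V) (Nx N' : Set V) : Prop :=
  IsConstrainedCompletion T Nx N' ∧
    ∀ N'' ⊆ N', IsConstrainedCompletion T Nx N'' → N'' = N'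

def IsInsertionNode (T : Cotree V) (N' : Set V) (u : Cotree V) : Prop :=
  u ∈ T.subtrees ∧ mixed N' u ∧ (∀ c ∈ u.children, uniform N' c) ∧
    ∀ y ∈ T.leaves, y ∉ u.leaves →
      (y ∈ N' ↔ ∃ w, IsLcaNodeLeaf T w u y ∧ w.isSeries)

def IsCMInsertionNode (T : Cotree V) (Nx : Set V) (u : Cotree V) : Prop :=
  ∃ N', IsMinimalConstrainedCompletion T Nx N' ∧ IsInsertionNode T N' u

def anchored (T u : Cotree V) (Nx : Set V) : Set V :=
  Nx ∪ {y | y ∈ T.leaves ∧ y ∉ u.leaves ∧ ∃ w, IsLcaNodeLeaf T w u y ∧ w.isSeries}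
     ∪ {y | ∃ c ∈ u.children, ¬ hollow Nx c ∧ y ∈ c.leaves}

end Cotree

namespace Cotree
variable {V : Type u}

/-- Custom induction principle. -/
lemma ind {motive : Cotree V → Prop} (hleaf : ∀ v, motive (.leaf v))
    (hnode : ∀ b ts, (∀ t ∈ ts, motive t) → motive (.node b ts)) :
    ∀ t, motive t
  | .leaf v => hleaf v
  | .node b ts => hnode b ts (fun t ht => ind hleaf hnode t)
decreasing_by simp_wf; have := List.sizeOf_lt_of_mem ht; omega

lemma leaves_node (b : Bool) (ts : List (Cotree V)) :
    (Cotree.node b ts).leaves = ts.flatMap leaves := by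
  rw [leaves]
  simp [List.flatMap]

lemma adj_node_iff (b : Bool) (ts : List (Cotree V)) (x y : V) :
    (Cotree.node b ts).adj x y ↔
      (∃ t ∈ ts, t.adj x y) ∨
      (b = true ∧ ∃ t ∈ ts, ∃ s ∈ ts, t ≠ s ∧ x ∈ t.leaves ∧ y ∈ s.leaves) := by
  rw [adj]
  constructor
  · rintro (⟨⟨t,ht⟩,-,h⟩|⟨hb,⟨t,ht⟩,-,⟨s,hs⟩,-,h1,h2,h3⟩)
    · exact Or.inl ⟨t,ht,h⟩
    · exact Or.inr ⟨hb,t,ht,s,hs,by simpa using h1,h2,h3⟩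
  · rintro (⟨t,ht,h⟩|⟨hb,t,ht,s,hs,h1,h2,h3⟩)
    · exact Or.inl ⟨⟨t,ht⟩, List.mem_attach _ _, h⟩
    · exact Or.inr ⟨hb, ⟨t,ht⟩, List.mem_attach _ _, ⟨s,hs⟩, List.mem_attach _ _,
        by simpa using h1, h2, h3⟩

lemma subtrees_node (b : Bool) (ts : List (Cotree V)) :
    (Cotree.node b ts).subtrees = .node b ts :: ts.flatMap subtrees := by
  rw [subtrees]; simp [List.flatMap]

lemma mem_subtrees_node {u : Cotree V} {b : Bool} {ts : List (Cotree V)} :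
    u ∈ (Cotree.node b ts).subtrees ↔ u = .node b ts ∨ ∃ t ∈ ts, u ∈ t.subtrees := by
  rw [subtrees_node]; simp

lemma self_mem_subtrees (t : Cotree V) : t ∈ t.subtrees := by
  cases t with
  | leaf v => rw [subtrees]; simp
  | node b ts => rw [mem_subtrees_node]; left; rfl

lemma valid_node_iff {b : Bool} {ts : List (Cotree V)} :
    (Cotree.node b ts).valid ↔ 2 ≤ ts.length ∧ ∀ t ∈ ts, t.valid ∧
      ∀ b' ts', t = .node b' ts' → b' ≠ b := by
  rw [valid]; simp

lemma subtrees_trans : ∀ (T : Cotree V) {t u : Cotree V},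
    u ∈ t.subtrees → t ∈ T.subtrees → u ∈ T.subtrees := by
  intro T
  induction T using ind with
  | hleaf v =>
    intro t u hu ht
    rw [subtrees] at ht; simp at ht; subst ht; exact hu
  | hnode b ts ih =>
    intro t u hu ht
    rw [mem_subtrees_node] at ht ⊢
    rcases ht with rfl | ⟨c, hc, htc⟩
    · rcases (mem_subtrees_node).1 hu with rfl | h
      · left; rfl
      · right; exact h
    · right; exact ⟨c, hc, ih c hc hu htc⟩

lemma adj_mem_leaves : ∀ (t : Cotree V) {x y : V},
    t.adj x y → x ∈ t.leaves ∧ y ∈ t.leaves := by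
  intro t
  induction t using ind with
  | hleaf v => intro x y h; rw [adj] at h; exact h.elim
  | hnode b ts ih =>
    intro x y h
    rw [adj_node_iff] at h
    rw [leaves_node]
    rcases h with ⟨c, hc, hadj⟩ | ⟨hb, c, hc, s, hs, hne, hx, hy⟩
    · obtain ⟨hx, hy⟩ := ih c hc hadj
      exact ⟨List.mem_flatMap.2 ⟨c, hc, hx⟩, List.mem_flatMap.2 ⟨c, hc, hy⟩⟩
    · exact ⟨List.mem_flatMap.2 ⟨c, hc, hx⟩, List.mem_flatMap.2 ⟨s, hs, hy⟩⟩

lemma adj_symm : ∀ (t : Cotree V) {x y : V}, t.adj x y → t.adj y x := by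
  intro t
  induction t using ind with
  | hleaf v => intro x y h; rw [adj] at h; exact h.elim
  | hnode b ts ih =>
    intro x y h
    rw [adj_node_iff] at h ⊢
    rcases h with ⟨c, hc, hadj⟩ | ⟨hb, c, hc, s, hs, hne, hx, hy⟩
    · exact Or.inl ⟨c, hc, ih c hc hadj⟩
    · exact Or.inr ⟨hb, s, hs, c, hc, Ne.symm hne, hy, hx⟩

lemma leaves_subset_of_mem_subtrees : ∀ (T : Cotree V) {t : Cotree V},
    t ∈ T.subtrees → ∀ x ∈ t.leaves, x ∈ T.leaves := by
  intro T
  induction T using ind with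
  | hleaf v =>
    intro t ht; rw [subtrees] at ht; simp at ht; subst ht; intro x hx; exact hx
  | hnode b ts ih =>
    intro t ht x hx
    rcases mem_subtrees_node.1 ht with rfl | ⟨c, hc, htc⟩
    · exact hx
    · rw [leaves_node]
      exact List.mem_flatMap.2 ⟨c, hc, ih c hc htc x hx⟩

lemma valid_of_mem_subtrees : ∀ (T : Cotree V) {t : Cotree V},
    T.valid → t ∈ T.subtrees → t.valid := by
  intro T
  induction T using ind with
  | hleaf v => intro t _ ht; rw [subtrees] at ht; simp at ht; subst ht; rw [valid]; trivial
  | hnode b ts ih =>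
    intro t hv ht
    rcases mem_subtrees_node.1 ht with rfl | ⟨c, hc, htc⟩
    · exact hv
    · exact ih c hc ((valid_node_iff.1 hv).2 c hc).1 htc

lemma leaves_ne_nil : ∀ (t : Cotree V), t.valid → t.leaves ≠ [] := by
  intro t
  induction t using ind with
  | hleaf v => intro _; rw [leaves]; simp
  | hnode b ts ih =>
    intro hv
    obtain ⟨hlen, hts⟩ := valid_node_iff.1 hv
    rw [leaves_node]
    obtain ⟨c, hc⟩ : ∃ c, c ∈ ts := by
      cases ts with
      | nil => simp at hlen
      | cons a l => exact ⟨a, List.mem_cons_self⟩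
    intro hnil
    have := List.flatMap_eq_nil_iff.1 hnil c hc
    exact ih c hc (hts c hc).1 this

lemma nodup_leaves_of_mem_subtrees : ∀ (T : Cotree V) {t : Cotree V},
    T.leaves.Nodup → t ∈ T.subtrees → t.leaves.Nodup := by
  intro T
  induction T using ind with
  | hleaf v => intro t _ ht; rw [subtrees] at ht; simp at ht; subst ht; rw [leaves]; simp
  | hnode b ts ih =>
    intro t hnd ht
    rcases mem_subtrees_node.1 ht with rfl | ⟨c, hc, htc⟩
    · exact hnd
    · rw [leaves_node] at hnd
      exact ih c hc ((List.nodup_flatMap.1 hnd).1 c hc) htc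

/-- distinct children of a nodup node have disjoint leaf sets -/
lemma leaves_disjoint {b : Bool} {ts : List (Cotree V)} (hnd : (Cotree.node b ts).leaves.Nodup)
    {t s : Cotree V} (ht : t ∈ ts) (hs : s ∈ ts) (hne : t ≠ s) :
    ∀ x, x ∈ t.leaves → x ∉ s.leaves := by
  rw [leaves_node] at hnd
  have hpw := (List.nodup_flatMap.1 hnd).2
  have hsym : Symmetric (Function.onFun List.Disjoint (leaves (V := V))) := by
    intro a b h
    exact List.Disjoint.symm h
  have := (haveI : Std.Symm (Function.onFun List.Disjoint (leaves (V := V))) := ⟨hsym⟩; hpw.forall) ht hs hne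
  intro x hx hxs
  exact this hx hxs

lemma eq_child_of_mem_leaves {b : Bool} {ts : List (Cotree V)}
    (hnd : (Cotree.node b ts).leaves.Nodup)
    {t s : Cotree V} (ht : t ∈ ts) (hs : s ∈ ts) {x : V}
    (hxt : x ∈ t.leaves) (hxs : x ∈ s.leaves) : t = s := by
  by_contra hne
  exact leaves_disjoint hnd ht hs hne x hxt hxs

/-- adjacency within a child, for nodes with nodup leaves -/
lemma adj_restrict {b : Bool} {ts : List (Cotree V)}
    (hnd : (Cotree.node b ts).leaves.Nodup)
    {t : Cotree V} (ht : t ∈ ts) {x y : V} (hx : x ∈ t.leaves) (hy : y ∈ t.leaves) :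
    (Cotree.node b ts).adj x y ↔ t.adj x y := by
  rw [adj_node_iff]
  constructor
  · rintro (⟨c, hc, hadj⟩ | ⟨hb, c, hc, s, hs, hne, hxc, hys⟩)
    · obtain ⟨hxc, hyc⟩ := adj_mem_leaves c hadj
      rwa [eq_child_of_mem_leaves hnd hc ht hxc hx] at hadj
    · exact absurd (eq_child_of_mem_leaves hnd hc ht hxc hx ▸
        eq_child_of_mem_leaves hnd hs ht hys hy ▸ rfl : c = s) hne
  · intro h; exact Or.inl ⟨t, ht, h⟩

lemma mem_child_of_mem_leaves {b : Bool} {ts : List (Cotree V)} {x : V}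
    (hx : x ∈ (Cotree.node b ts).leaves) : ∃ t ∈ ts, x ∈ t.leaves := by
  rw [leaves_node] at hx
  simpa using List.mem_flatMap.1 hx

end Cotree

namespace Cotree
variable {V : Type u}

lemma mixed_iff {N : Set V} {t : Cotree V} :
    mixed N t ↔ (∃ a ∈ t.leaves, a ∈ N) ∧ (∃ b ∈ t.leaves, b ∉ N) := by
  unfold mixed uniform full hollow
  push_neg
  tauto

lemma uniform_congr {N N' : Set V} {t : Cotree V}
    (h : ∀ v ∈ t.leaves, v ∈ N ↔ v ∈ N') :
    uniform N t ↔ uniform N' t := by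
  unfold uniform full hollow
  constructor
  · rintro (hf | hh)
    · exact Or.inl fun v hv => (h v hv).1 (hf v hv)
    · exact Or.inr fun v hv hv' => hh v hv ((h v hv).2 hv')
  · rintro (hf | hh)
    · exact Or.inl fun v hv => (h v hv).2 (hf v hv)
    · exact Or.inr fun v hv hv' => hh v hv ((h v hv).1 hv')

lemma mixed_congr {N N' : Set V} {t : Cotree V}
    (h : ∀ v ∈ t.leaves, v ∈ N ↔ v ∈ N') :
    mixed N t ↔ mixed N' t := not_congr (uniform_congr h)

lemma mixed_mono {N : Set V} {t u : Cotree V} (hsub : ∀ v ∈ u.leaves, v ∈ t.leaves)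
    (h : mixed N u) : mixed N t := by
  rw [mixed_iff] at h ⊢
  obtain ⟨⟨a, ha, haN⟩, ⟨c, hc, hcN⟩⟩ := h
  exact ⟨⟨a, hsub a ha, haN⟩, ⟨c, hsub c hc, hcN⟩⟩

lemma not_mixed_leaf {N : Set V} (v : V) : ¬ mixed N (Cotree.leaf v) := by
  rw [mixed_iff]
  rintro ⟨⟨a, ha, haN⟩, ⟨c, hc, hcN⟩⟩
  rw [leaves] at ha hc
  simp at ha hc
  subst ha; subst hc; exact hcN haN

lemma isSeries_node_iff {b : Bool} {ts : List (Cotree V)} :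
    (Cotree.node b ts).isSeries ↔ b = true := by
  cases b <;> simp [isSeries]

/-- u ∈ exactly one child's subtrees (given valid & nodup): if u in subtrees of two children,
they agree. -/
lemma child_unique_subtrees {b : Bool} {ts : List (Cotree V)}
    (hval : (Cotree.node b ts).valid) (hnd : (Cotree.node b ts).leaves.Nodup)
    {t s u : Cotree V} (ht : t ∈ ts) (hs : s ∈ ts)
    (hut : u ∈ t.subtrees) (hus : u ∈ s.subtrees) : t = s := by
  have huv : u.valid := valid_of_mem_subtrees t ((valid_node_iff.1 hval).2 t ht).1 hut
  obtain ⟨x, hx⟩ := List.exists_mem_of_ne_nil _ (leaves_ne_nil u huv)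
  exact eq_child_of_mem_leaves hnd ht hs
    (leaves_subset_of_mem_subtrees t hut x hx) (leaves_subset_of_mem_subtrees s hus x hx)

/-- LCA at the root -/
lemma isLca_root {b : Bool} {ts : List (Cotree V)}
    (hval : (Cotree.node b ts).valid) (hnd : (Cotree.node b ts).leaves.Nodup)
    {t s u : Cotree V} (ht : t ∈ ts) (hs : s ∈ ts) (hst : s ≠ t)
    (hu : u ∈ t.subtrees) {y : V} (hy : y ∈ s.leaves) :
    IsLcaNodeLeaf (Cotree.node b ts) (Cotree.node b ts) u y := by
  refine ⟨self_mem_subtrees _, subtrees_trans _ hu (mem_subtrees_node.2 (Or.inr ⟨t, ht, self_mem_subtrees t⟩)),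
    leaves_subset_of_mem_subtrees _ (mem_subtrees_node.2 (Or.inr ⟨s, hs, self_mem_subtrees s⟩)) y hy, ?_⟩
  intro c hc
  rintro ⟨huc, hyc⟩
  rw [children] at hc
  have hct : c = t := child_unique_subtrees hval hnd hc ht huc hu
  subst hct
  exact leaves_disjoint hnd hs hc hst y hy hyc

/-- LCA existence -/
lemma isLca_exists : ∀ (T : Cotree V), T.valid → T.leaves.Nodup →
    ∀ {u : Cotree V} {y : V}, u ∈ T.subtrees → y ∈ T.leaves → y ∉ u.leaves →
    ∃ w, IsLcaNodeLeaf T w u y := by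
  intro T
  induction T using ind with
  | hleaf v =>
    intro _ _ u y hu hy hyu
    rw [subtrees] at hu; simp at hu; subst hu
    exact absurd hy hyu
  | hnode b ts ih =>
    intro hval hnd u y hu hy hyu
    rcases mem_subtrees_node.1 hu with rfl | ⟨t, ht, hut⟩
    · exact absurd hy hyu
    · obtain ⟨s, hs, hys⟩ := mem_child_of_mem_leaves hy
      by_cases hst : s = t
      · subst hst
        obtain ⟨w, hw⟩ := ih s hs ((valid_node_iff.1 hval).2 s hs).1
          (nodup_leaves_of_mem_subtrees _ hnd (mem_subtrees_node.2 (Or.inr ⟨s, hs, self_mem_subtrees s⟩)))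
          hut hys hyu
        exact ⟨w, subtrees_trans _ hw.1 (mem_subtrees_node.2 (Or.inr ⟨s, hs, self_mem_subtrees s⟩)),
          hw.2.1, hw.2.2.1, hw.2.2.2⟩
      · exact ⟨_, isLca_root hval hnd ht hs hst hut hys⟩

/-- LCA uniqueness -/
lemma isLca_unique : ∀ (T : Cotree V), T.valid → T.leaves.Nodup →
    ∀ {w w' u : Cotree V} {y : V}, IsLcaNodeLeaf T w u y → IsLcaNodeLeaf T w' u y → w = w' := by
  intro T
  induction T using ind with
  | hleaf v =>
    intro _ _ w w' u y hw hw'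
    have h1 := hw.1; have h2 := hw'.1
    rw [subtrees] at h1 h2; simp at h1 h2; rw [h1, h2]
  | hnode b ts ih =>
    intro hval hnd w w' u y hw hw'
    obtain ⟨hwT, huw, hyw, hcw⟩ := hw
    obtain ⟨hwT', huw', hyw', hcw'⟩ := hw'
    rcases mem_subtrees_node.1 hwT with rfl | ⟨t, ht, hwt⟩
    · rcases mem_subtrees_node.1 hwT' with rfl | ⟨t', ht', hwt'⟩
      · rfl
      · exfalso
        refine hcw t' (by rw [children]; exact ht') ⟨subtrees_trans _ huw' hwt', ?_⟩
        exact leaves_subset_of_mem_subtrees _ hwt' y hyw'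
    · rcases mem_subtrees_node.1 hwT' with rfl | ⟨t', ht', hwt'⟩
      · exfalso
        refine hcw' t (by rw [children]; exact ht) ⟨subtrees_trans _ huw hwt, ?_⟩
        exact leaves_subset_of_mem_subtrees _ hwt y hyw
      · have htt' : t = t' := child_unique_subtrees hval hnd ht ht'
          (subtrees_trans _ huw hwt) (subtrees_trans _ huw' hwt')
        subst htt'
        exact ih t ht ((valid_node_iff.1 hval).2 t ht).1
          (nodup_leaves_of_mem_subtrees _ hnd (mem_subtrees_node.2 (Or.inr ⟨t, ht, self_mem_subtrees t⟩)))
          ⟨hwt, huw, hyw, hcw⟩ ⟨hwt', huw', hyw', hcw'⟩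

lemma isLca_lift {T t w u : Cotree V} {y : V} (htT : t ∈ T.subtrees)
    (h : IsLcaNodeLeaf t w u y) : IsLcaNodeLeaf T w u y :=
  ⟨subtrees_trans _ h.1 htT, h.2.1, h.2.2.1, h.2.2.2⟩

end Cotree

lemma not_cograph_of_p4 {α : Type*} {G : SimpleGraph α} {a b c d : α}
    (hab : G.Adj a b) (hbc : G.Adj b c) (hcd : G.Adj c d)
    (hac : ¬ G.Adj a c) (had : ¬ G.Adj a d) (hbd : ¬ G.Adj b d)
    (nac : a ≠ c) (nad : a ≠ d) (nbd : b ≠ d) :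
    ¬ IsCograph G := by
  intro hiso
  refine hiso ⟨![a,b,c,d], ?_, ?_⟩
  · intro i j h
    have nab := hab.ne
    have nbc := hbc.ne
    have ncd := hcd.ne
    fin_cases i <;> fin_cases j <;> simp_all
  · intro i j
    have hba := hab.symm
    have hcb := hbc.symm
    have hdc := hcd.symm
    have hca : ¬ G.Adj c a := fun h => hac h.symm
    have hda : ¬ G.Adj d a := fun h => had h.symm
    have hdb : ¬ G.Adj d b := fun h => hbd h.symm
    have hirr : ∀ x, ¬ G.Adj x x := fun x => G.irrefl
    fin_cases i <;> fin_cases j <;> simp_all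

lemma chain4 {P : Fin 4 → Prop} (h01 : P 0 ↔ P 1) (h12 : P 1 ↔ P 2) (h23 : P 2 ↔ P 3) :
    ∀ n m : Fin 4, P n → P m := by
  have h : ∀ i : Fin 4, P i ↔ P 0 := by intro i; fin_cases i <;> tauto
  intro n m hn
  exact (h m).2 ((h n).1 hn)

lemma chain4' {P : Fin 4 → Prop} (h02 : P 0 ↔ P 2) (h03 : P 0 ↔ P 3) (h13 : P 1 ↔ P 3) :
    ∀ n m : Fin 4, P n → P m := by
  have h : ∀ i : Fin 4, P i ↔ P 0 := by intro i; fin_cases i <;> tauto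
  intro n m hn
  exact (h m).2 ((h n).1 hn)

lemma pick_aux : ∀ n : Fin 4, ∃ i j : Fin 4,
    ¬((i : ℕ) + 1 = (j : ℕ) ∨ (j : ℕ) + 1 = (i : ℕ)) ∧
    ((i : ℕ) + 1 = (n : ℕ) ∨ (n : ℕ) + 1 = (i : ℕ)) ∧
    ¬((j : ℕ) + 1 = (n : ℕ) ∨ (n : ℕ) + 1 = (j : ℕ)) ∧ j ≠ n ∧ i ≠ n := by decide

lemma pick_aux2 : ∀ n : Fin 4, ∃ m : Fin 4, m ≠ n ∧
    ¬((m : ℕ) + 1 = (n : ℕ) ∨ (n : ℕ) + 1 = (m : ℕ)) := by decide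

namespace Cotree
variable {V : Type u}

lemma plus_adj_some_some {T : Cotree V} {N : Set V} {v w : V} :
    (graphPlus T N).Adj (some v) (some w) ↔ v ≠ w ∧ T.adj v w := by
  rw [graphPlus, SimpleGraph.fromRel_adj]
  constructor
  · rintro ⟨hne, h | h⟩
    · exact ⟨fun h' => hne (by rw [h']), h⟩
    · exact ⟨fun h' => hne (by rw [h']), adj_symm _ h⟩
  · rintro ⟨hne, h⟩
    exact ⟨fun h' => hne (by injection h'), Or.inl h⟩

lemma plus_adj_none_some {T : Cotree V} {N : Set V} {v : V} :
    (graphPlus T N).Adj none (some v) ↔ v ∈ N := by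
  rw [graphPlus, SimpleGraph.fromRel_adj]
  constructor
  · rintro ⟨hne, h | h⟩
    · exact h
    · exact h.elim
  · intro h
    exact ⟨by simp, Or.inl h⟩

lemma plus_adj_some_none {T : Cotree V} {N : Set V} {v : V} :
    (graphPlus T N).Adj (some v) none ↔ v ∈ N := by
  rw [SimpleGraph.adj_comm]; exact plus_adj_none_some

/-- every endpoint of an edge of graphPlus is none or a leaf in N∪leaves -/
lemma plus_adj_classify {T : Cotree V} {N : Set V} (hN : ∀ v ∈ N, v ∈ T.leaves)
    {p q : Option V} (h : (graphPlus T N).Adj p q) :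
    p = none ∨ ∃ v, p = some v ∧ v ∈ T.leaves := by
  cases p with
  | none => exact Or.inl rfl
  | some v =>
    right
    refine ⟨v, rfl, ?_⟩
    cases q with
    | none => exact hN v (plus_adj_some_none.1 h)
    | some w => exact (adj_mem_leaves _ (plus_adj_some_some.1 h).2).1

end Cotree

namespace Cotree
variable {V : Type u}

lemma graphOf_adj_iff {T : Cotree V} {x y : V} :
    (graphOf T).Adj x y ↔ x ≠ y ∧ T.adj x y := by
  rw [graphOf, SimpleGraph.fromRel_adj]
  constructor
  · rintro ⟨hne, h | h⟩
    · exact ⟨hne, h⟩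
    · exact ⟨hne, adj_symm _ h⟩
  · rintro ⟨hne, h⟩
    exact ⟨hne, Or.inl h⟩

lemma isCograph_graphOf : ∀ (T : Cotree V), T.leaves.Nodup → IsCograph (graphOf T) := by
  intro T
  induction T using ind with
  | hleaf v =>
    rintro _ ⟨f, hinj, hf⟩
    have h01 := (hf 0 1).2 (by decide)
    have := (graphOf_adj_iff.1 h01).2
    rw [adj] at this
    exact this
  | hnode b ts ih =>
    rintro hnd ⟨f, hinj, hf⟩
    have h01 := (hf 0 1).2 (by decide)
    have h12 := (hf 1 2).2 (by decide)
    have h23 := (hf 2 3).2 (by decide)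
    have h02 : ¬ (graphOf (Cotree.node b ts)).Adj (f 0) (f 2) := by
      rw [hf]; decide
    have h03 : ¬ (graphOf (Cotree.node b ts)).Adj (f 0) (f 3) := by
      rw [hf]; decide
    have h13 : ¬ (graphOf (Cotree.node b ts)).Adj (f 1) (f 3) := by
      rw [hf]; decide
    -- memberships
    have m0 := (adj_mem_leaves _ (graphOf_adj_iff.1 h01).2).1
    have m1 := (adj_mem_leaves _ (graphOf_adj_iff.1 h01).2).2
    have m2 := (adj_mem_leaves _ (graphOf_adj_iff.1 h12).2).2
    have m3 := (adj_mem_leaves _ (graphOf_adj_iff.1 h23).2).2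
    obtain ⟨c0, hc0, mc0⟩ := mem_child_of_mem_leaves m0
    obtain ⟨c1, hc1, mc1⟩ := mem_child_of_mem_leaves m1
    obtain ⟨c2, hc2, mc2⟩ := mem_child_of_mem_leaves m2
    obtain ⟨c3, hc3, mc3⟩ := mem_child_of_mem_leaves m3
    -- show all four in same child c0
    have hall : f 1 ∈ c0.leaves ∧ f 2 ∈ c0.leaves ∧ f 3 ∈ c0.leaves := by
      cases b with
      | false =>
        have key : ∀ i j : Fin 4, (graphOf (Cotree.node false ts)).Adj (f i) (f j) →
            ∃ c ∈ ts, f i ∈ c.leaves ∧ f j ∈ c.leaves := by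
          intro i j h
          have := (graphOf_adj_iff.1 h).2
          rw [adj_node_iff] at this
          rcases this with ⟨c, hc, hadj⟩ | ⟨hb, _⟩
          · exact ⟨c, hc, (adj_mem_leaves _ hadj).1, (adj_mem_leaves _ hadj).2⟩
          · exact absurd hb (by simp)
        obtain ⟨d0, hd0, e00, e01⟩ := key 0 1 h01
        obtain ⟨d1, hd1, e10, e11⟩ := key 1 2 h12
        obtain ⟨d2, hd2, e20, e21⟩ := key 2 3 h23
        have : d0 = c0 := eq_child_of_mem_leaves hnd hd0 hc0 e00 mc0
        subst this
        have : d1 = d0 := eq_child_of_mem_leaves hnd hd1 hd0 e10 e01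
        subst this
        have : d2 = d1 := eq_child_of_mem_leaves hnd hd2 hd1 e20 e11
        subst this
        exact ⟨e01, e11, e21⟩
      | true =>
        have key : ∀ i j : Fin 4, ¬ (graphOf (Cotree.node true ts)).Adj (f i) (f j) →
            i ≠ j →
            ∀ ci cj, ci ∈ ts → cj ∈ ts → f i ∈ ci.leaves → f j ∈ cj.leaves → ci = cj := by
          intro i j h hij ci cj hci hcj hfi hfj
          by_contra hne
          exact h (graphOf_adj_iff.2 ⟨fun he => hij (hinj he),
            (adj_node_iff _ _ _ _).2 (Or.inr ⟨rfl, ci, hci, cj, hcj, hne, hfi, hfj⟩)⟩)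
        have e02 : c0 = c2 := key 0 2 h02 (by decide) c0 c2 hc0 hc2 mc0 mc2
        have e03 : c0 = c3 := key 0 3 h03 (by decide) c0 c3 hc0 hc3 mc0 mc3
        have e13 : c1 = c3 := key 1 3 h13 (by decide) c1 c3 hc1 hc3 mc1 mc3
        exact ⟨(e13.trans e03.symm) ▸ mc1, e02.symm ▸ mc2, e03.symm ▸ mc3⟩
    obtain ⟨n1, n2, n3⟩ := hall
    -- transfer P4 into child c0
    have hndc : c0.leaves.Nodup := by
      rw [leaves_node] at hnd
      exact (List.nodup_flatMap.1 hnd).1 c0 hc0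
    refine ih c0 hc0 hndc ⟨f, hinj, ?_⟩
    have mem : ∀ i : Fin 4, f i ∈ c0.leaves := by
      intro i
      fin_cases i <;> assumption
    intro i j
    rw [← hf i j, graphOf_adj_iff, graphOf_adj_iff,
      adj_restrict hnd hc0 (mem i) (mem j)]

end Cotree

namespace Cotree
variable {V : Type u}

lemma mem_subtrees_of_mem_children {u c : Cotree V} (hc : c ∈ u.children) :
    c ∈ u.subtrees := by
  cases u with
  | leaf v => rw [children] at hc; exact absurd hc List.not_mem_nil
  | node b ts =>
    rw [children] at hc
    exact mem_subtrees_node.2 (Or.inr ⟨c, hc, self_mem_subtrees c⟩)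

lemma exists_distinct_child {b : Bool} {ts : List (Cotree V)}
    (hval : (Cotree.node b ts).valid) (hnd : (Cotree.node b ts).leaves.Nodup)
    {c : Cotree V} (hc : c ∈ ts) : ∃ c' ∈ ts, c' ≠ c := by
  obtain ⟨hlen, hts⟩ := valid_node_iff.1 hval
  cases ts with
  | nil => simp at hlen
  | cons x rest =>
    cases rest with
    | nil => simp at hlen
    | cons y l =>
      have hx : x ∈ x :: y :: l := by simp
      have hxy : x ≠ y := by
        intro he
        obtain ⟨v, hv⟩ := List.exists_mem_of_ne_nil _ (leaves_ne_nil x (hts x hx).1)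
        rw [leaves_node, List.flatMap_cons, List.nodup_append] at hnd
        exact hnd.2.2 v hv v (List.mem_flatMap.2 ⟨y, by simp, he ▸ hv⟩) rfl
      by_cases hcx : c = x
      · exact ⟨y, by simp, by rw [hcx]; exact fun h => hxy h.symm⟩
      · exact ⟨x, by simp, fun h => hcx h.symm⟩

lemma not_hollow_iff {N : Set V} {t : Cotree V} :
    ¬ hollow N t ↔ ∃ v ∈ t.leaves, v ∈ N := by
  unfold hollow; push_neg; rfl

lemma not_full_iff {N : Set V} {t : Cotree V} :
    ¬ full N t ↔ ∃ v ∈ t.leaves, v ∉ N := by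
  unfold full; push_neg; rfl

/-- a mixed node has witnesses in two distinct children -/
lemma mixed_pair_cross {b : Bool} {ts : List (Cotree V)} {N : Set V}
    (hval : (Cotree.node b ts).valid) (hnd : (Cotree.node b ts).leaves.Nodup)
    (hmix : mixed N (Cotree.node b ts)) :
    ∃ c1 ∈ ts, ∃ c2 ∈ ts, c1 ≠ c2 ∧ (∃ a ∈ c1.leaves, a ∈ N) ∧ ∃ v ∈ c2.leaves, v ∉ N := by
  obtain ⟨⟨a, haL, haN⟩, ⟨w, hwL, hwN⟩⟩ := mixed_iff.1 hmix
  obtain ⟨ca, hca, maca⟩ := mem_child_of_mem_leaves haL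
  obtain ⟨cw, hcw, mwcw⟩ := mem_child_of_mem_leaves hwL
  by_cases he : ca = cw
  · subst he
    obtain ⟨c', hc', hne⟩ := exists_distinct_child hval hnd hca
    by_cases hh : hollow N c'
    · obtain ⟨v, hv⟩ := List.exists_mem_of_ne_nil _
        (leaves_ne_nil c' ((valid_node_iff.1 hval).2 c' hc').1)
      exact ⟨ca, hca, c', hc', fun h => hne h.symm, ⟨a, maca, haN⟩, ⟨v, hv, hh v hv⟩⟩
    · obtain ⟨v, hvL, hvN⟩ := not_hollow_iff.1 hh
      exact ⟨c', hc', ca, hca, hne, ⟨v, hvL, hvN⟩, ⟨w, mwcw, hwN⟩⟩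
  · exact ⟨ca, hca, cw, hcw, he, ⟨a, maca, haN⟩, ⟨w, mwcw, hwN⟩⟩

lemma not_adj_cross_parallel {ts : List (Cotree V)}
    (hnd : (Cotree.node false ts).leaves.Nodup)
    {c1 c2 : Cotree V} (h1 : c1 ∈ ts) (h2 : c2 ∈ ts) (hne : c1 ≠ c2)
    {a v : V} (ha : a ∈ c1.leaves) (hv : v ∈ c2.leaves) :
    ¬ (Cotree.node false ts).adj a v := by
  intro h
  rcases (adj_node_iff _ _ _ _).1 h with ⟨c, hc, hadj⟩ | ⟨hb, _⟩
  · obtain ⟨hac, hvc⟩ := adj_mem_leaves c hadj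
    exact hne ((eq_child_of_mem_leaves hnd h1 hc ha hac).trans
      (eq_child_of_mem_leaves hnd hc h2 hvc hv))
  · simp at hb

lemma adj_cross_series {ts : List (Cotree V)}
    {c1 c2 : Cotree V} (h1 : c1 ∈ ts) (h2 : c2 ∈ ts) (hne : c1 ≠ c2)
    {a v : V} (ha : a ∈ c1.leaves) (hv : v ∈ c2.leaves) :
    (Cotree.node true ts).adj a v :=
  (adj_node_iff _ _ _ _).2 (Or.inr ⟨rfl, c1, h1, c2, h2, hne, ha, hv⟩)

/-- forward P4 lemma, series root: a sibling of a mixed child must be full -/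
lemma not_cograph_A {ts : List (Cotree V)} {Nx : Set V}
    (hval : (Cotree.node true ts).valid) (hnd : (Cotree.node true ts).leaves.Nodup)
    {t s : Cotree V} (ht : t ∈ ts) (hs : s ∈ ts) (hst : s ≠ t)
    (hmixt : mixed Nx t) {y : V} (hy : y ∈ s.leaves) (hyN : y ∉ Nx) :
    ¬ IsCograph (graphPlus (Cotree.node true ts) Nx) := by
  -- t must be a parallel node
  obtain ⟨b', l, rfl⟩ : ∃ b' l, t = Cotree.node b' l := by
    cases t with
    | leaf v => exact absurd hmixt (not_mixed_leaf v)
    | node b' l => exact ⟨b', l, rfl⟩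
  have hb' : b' = false := by
    have := ((valid_node_iff.1 hval).2 _ ht).2 b' l rfl
    simpa using this
  subst hb'
  have hvalt : (Cotree.node false l).valid := ((valid_node_iff.1 hval).2 _ ht).1
  have hndt : (Cotree.node false l).leaves.Nodup :=
    nodup_leaves_of_mem_subtrees _ hnd
      (mem_subtrees_node.2 (Or.inr ⟨_, ht, self_mem_subtrees _⟩))
  obtain ⟨c1, hc1, c2, hc2, hcc, ⟨a, haL, haN⟩, ⟨v, hvL, hvN⟩⟩ :=
    mixed_pair_cross hvalt hndt hmixt
  have haT : a ∈ (Cotree.node false l).leaves := by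
    rw [leaves_node]; exact List.mem_flatMap.2 ⟨c1, hc1, haL⟩
  have hvT : v ∈ (Cotree.node false l).leaves := by
    rw [leaves_node]; exact List.mem_flatMap.2 ⟨c2, hc2, hvL⟩
  have hts : ∀ x ∈ (Cotree.node false l).leaves, x ∉ s.leaves :=
    leaves_disjoint hnd ht hs (fun h => hst h.symm)
  have hay : a ≠ y := fun h => hts a haT (h ▸ hy)
  have hvy : v ≠ y := fun h => hts v hvT (h ▸ hy)
  -- P4 : none - a - y - v
  refine not_cograph_of_p4 (a := (none : Option V)) (b := some a) (c := some y) (d := some v)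
    ?_ ?_ ?_ ?_ ?_ ?_ ?_ ?_ ?_
  · exact plus_adj_none_some.2 haN
  · exact plus_adj_some_some.2 ⟨hay, adj_cross_series ht hs (fun h => hst h.symm) haT hy⟩
  · exact plus_adj_some_some.2 ⟨fun h => hvy h.symm,
      adj_symm _ (adj_cross_series ht hs (fun h => hst h.symm) hvT hy)⟩
  · intro h; exact hyN (plus_adj_none_some.1 h)
  · intro h; exact hvN (plus_adj_none_some.1 h)
  · intro h
    obtain ⟨hne, hadj⟩ := plus_adj_some_some.1 h
    rw [adj_restrict hnd ht haT hvT] at hadj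
    exact not_adj_cross_parallel hndt hc1 hc2 hcc haL hvL hadj
  · simp
  · simp
  · intro h; exact hvN (by injection h with h'; exact h' ▸ haN)

/-- forward P4 lemma, parallel root: a sibling of a mixed child must be hollow -/
lemma not_cograph_B {ts : List (Cotree V)} {Nx : Set V}
    (hval : (Cotree.node false ts).valid) (hnd : (Cotree.node false ts).leaves.Nodup)
    {t s : Cotree V} (ht : t ∈ ts) (hs : s ∈ ts) (hst : s ≠ t)
    (hmixt : mixed Nx t) {y : V} (hy : y ∈ s.leaves) (hyN : y ∈ Nx) :
    ¬ IsCograph (graphPlus (Cotree.node false ts) Nx) := by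
  obtain ⟨b', l, rfl⟩ : ∃ b' l, t = Cotree.node b' l := by
    cases t with
    | leaf v => exact absurd hmixt (not_mixed_leaf v)
    | node b' l => exact ⟨b', l, rfl⟩
  have hb' : b' = true := by
    have := ((valid_node_iff.1 hval).2 _ ht).2 b' l rfl
    simpa using this
  subst hb'
  have hvalt : (Cotree.node true l).valid := ((valid_node_iff.1 hval).2 _ ht).1
  have hndt : (Cotree.node true l).leaves.Nodup :=
    nodup_leaves_of_mem_subtrees _ hnd
      (mem_subtrees_node.2 (Or.inr ⟨_, ht, self_mem_subtrees _⟩))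
  obtain ⟨c1, hc1, c2, hc2, hcc, ⟨a, haL, haN⟩, ⟨v, hvL, hvN⟩⟩ :=
    mixed_pair_cross hvalt hndt hmixt
  have haT : a ∈ (Cotree.node true l).leaves := by
    rw [leaves_node]; exact List.mem_flatMap.2 ⟨c1, hc1, haL⟩
  have hvT : v ∈ (Cotree.node true l).leaves := by
    rw [leaves_node]; exact List.mem_flatMap.2 ⟨c2, hc2, hvL⟩
  have hts : ∀ x ∈ (Cotree.node true l).leaves, x ∉ s.leaves :=
    leaves_disjoint hnd ht hs (fun h => hst h.symm)
  have hay : a ≠ y := fun h => hts a haT (h ▸ hy)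
  have hvy : v ≠ y := fun h => hts v hvT (h ▸ hy)
  have hav : a ≠ v := fun h => hvN (h ▸ haN)
  have hadjav : (Cotree.node true l).adj a v := adj_cross_series hc1 hc2 hcc haL hvL
  -- P4 : v - a - none - y
  refine not_cograph_of_p4 (a := some v) (b := some a) (c := (none : Option V)) (d := some y)
    ?_ ?_ ?_ ?_ ?_ ?_ ?_ ?_ ?_
  · exact plus_adj_some_some.2 ⟨fun h => hav h.symm,
      (adj_node_iff _ _ _ _).2 (Or.inl ⟨_, ht, adj_symm _ hadjav⟩)⟩
  · exact plus_adj_some_none.2 haN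
  · exact plus_adj_none_some.2 hyN
  · intro h; exact hvN (plus_adj_some_none.1 h)
  · intro h
    obtain ⟨hne, hadj⟩ := plus_adj_some_some.1 h
    exact not_adj_cross_parallel hnd ht hs (fun h => hst h.symm) hvT hy hadj
  · intro h
    obtain ⟨hne, hadj⟩ := plus_adj_some_some.1 h
    exact not_adj_cross_parallel hnd ht hs (fun h => hst h.symm) haT hy hadj
  · simp
  · intro h; injection h with h'; exact hvN (h'.symm ▸ hyN)
  · intro h; injection h with h'; exact hay h'
end Cotree

namespace Cotree
variable {V : Type u}

/-- the restricted neighbourhood -/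
def restrN (N : Set V) (t : Cotree V) : Set V := {v | v ∈ N ∧ v ∈ t.leaves}

lemma restrN_subset {N : Set V} {t : Cotree V} : ∀ v ∈ restrN N t, v ∈ t.leaves :=
  fun _ h => h.2

lemma mem_restrN_iff {N : Set V} {t : Cotree V} {v : V} (hv : v ∈ t.leaves) :
    v ∈ restrN N t ↔ v ∈ N := ⟨fun h => h.1, fun h => ⟨h, hv⟩⟩

/-- region of t within the big plus-graph -/
def InReg (t : Cotree V) (p : Option V) : Prop :=
  p = none ∨ ∃ v, p = some v ∧ v ∈ t.leaves

lemma plus_adj_restrict {b : Bool} {ts : List (Cotree V)} {Nx : Set V}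
    (hnd : (Cotree.node b ts).leaves.Nodup) {t : Cotree V} (ht : t ∈ ts)
    {p q : Option V} (hp : InReg t p) (hq : InReg t q) :
    (graphPlus (Cotree.node b ts) Nx).Adj p q ↔ (graphPlus t (restrN Nx t)).Adj p q := by
  rcases hp with rfl | ⟨v, rfl, hv⟩
  · rcases hq with rfl | ⟨w, rfl, hw⟩
    · simp
    · rw [plus_adj_none_some, plus_adj_none_some, mem_restrN_iff hw]
  · rcases hq with rfl | ⟨w, rfl, hw⟩
    · rw [plus_adj_some_none, plus_adj_some_none, mem_restrN_iff hv]
    · rw [plus_adj_some_some, plus_adj_some_some, adj_restrict hnd ht hv hw]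

/-- every vertex of a P4 is in the support region -/
lemma p4_vertex_classify {T : Cotree V} {N : Set V} (hN : ∀ v ∈ N, v ∈ T.leaves)
    {f : Fin 4 → Option V}
    (hf : ∀ i j : Fin 4, (graphPlus T N).Adj (f i) (f j) ↔ (i.val + 1 = j.val ∨ j.val + 1 = i.val)) :
    ∀ i : Fin 4, f i = none ∨ ∃ v, f i = some v ∧ v ∈ T.leaves := by
  have h01 := (hf 0 1).2 (by decide)
  have h12 := (hf 1 2).2 (by decide)
  have h23 := (hf 2 3).2 (by decide)
  intro i
  fin_cases i
  · exact plus_adj_classify hN h01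
  · exact plus_adj_classify hN h12
  · exact plus_adj_classify hN h23
  · exact plus_adj_classify hN h23.symm

/-- a P4 all of whose vertices are `some` contradicts `isCograph_graphOf` -/
lemma no_p4_allsome {T : Cotree V} {N : Set V} (hnd : T.leaves.Nodup)
    {f : Fin 4 → Option V} (hinj : Function.Injective f)
    (hf : ∀ i j : Fin 4, (graphPlus T N).Adj (f i) (f j) ↔ (i.val + 1 = j.val ∨ j.val + 1 = i.val))
    (hsome : ∀ i : Fin 4, ∃ v, f i = some v) : False := by
  choose g hg using hsome
  refine isCograph_graphOf T hnd ⟨g, ?_, ?_⟩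
  · intro i j h
    exact hinj (by rw [hg i, hg j, h])
  · intro i j
    rw [← hf i j, hg i, hg j, plus_adj_some_some, graphOf_adj_iff]

/-- transfer of cographness to the subtree of a child -/
lemma isCograph_restrict {b : Bool} {ts : List (Cotree V)} {Nx : Set V}
    (hnd : (Cotree.node b ts).leaves.Nodup) {t : Cotree V} (ht : t ∈ ts)
    (hcog : IsCograph (graphPlus (Cotree.node b ts) Nx)) :
    IsCograph (graphPlus t (restrN Nx t)) := by
  rintro ⟨f, hinj, hf⟩
  have hreg : ∀ i : Fin 4, InReg t (f i) := by
    intro i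
    have := p4_vertex_classify (T := t) (N := restrN Nx t) restrN_subset hf i
    exact this
  refine hcog ⟨f, hinj, ?_⟩
  intro i j
  rw [plus_adj_restrict hnd ht (hreg i) (hreg j)]
  exact hf i j

lemma leaves_subset_child {b : Bool} {ts : List (Cotree V)} {t : Cotree V} (ht : t ∈ ts) :
    ∀ x ∈ t.leaves, x ∈ (Cotree.node b ts).leaves := by
  intro x hx
  rw [leaves_node]
  exact List.mem_flatMap.2 ⟨t, ht, hx⟩

/-- lifting an insertion node from a child, provided all siblings obey the root type -/
lemma insertion_lift {b : Bool} {ts : List (Cotree V)} {Nx : Set V}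
    (hval : (Cotree.node b ts).valid) (hnd : (Cotree.node b ts).leaves.Nodup)
    {t : Cotree V} (ht : t ∈ ts) {u : Cotree V}
    (hsib : ∀ s ∈ ts, s ≠ t → ∀ y ∈ s.leaves, (y ∈ Nx ↔ b = true))
    (hins : IsInsertionNode t (restrN Nx t) u) :
    IsInsertionNode (Cotree.node b ts) Nx u := by
  obtain ⟨hut, hmixu, hunif, hcond⟩ := hins
  have htT : t ∈ (Cotree.node b ts).subtrees :=
    mem_subtrees_node.2 (Or.inr ⟨t, ht, self_mem_subtrees t⟩)
  have hul : ∀ v ∈ u.leaves, v ∈ t.leaves := leaves_subset_of_mem_subtrees t hut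
  have hvalt : t.valid := ((valid_node_iff.1 hval).2 t ht).1
  have hndt : t.leaves.Nodup := nodup_leaves_of_mem_subtrees _ hnd htT
  refine ⟨subtrees_trans _ hut htT, ?_, ?_, ?_⟩
  · exact (mixed_congr (fun v hv => mem_restrN_iff (hul v hv))).1 hmixu
  · intro c hc
    have hcl : ∀ v ∈ c.leaves, v ∈ t.leaves := fun v hv =>
      hul v (leaves_subset_of_mem_subtrees u (mem_subtrees_of_mem_children hc) v hv)
    exact (uniform_congr (fun v hv => mem_restrN_iff (hcl v hv))).1 (hunif c hc)
  · intro y hy hyu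
    by_cases hyt : y ∈ t.leaves
    · rw [show (y ∈ Nx) = (y ∈ restrN Nx t) from propext (mem_restrN_iff hyt).symm,
        hcond y hyt hyu]
      constructor
      · rintro ⟨w, hw, hser⟩
        exact ⟨w, isLca_lift htT hw, hser⟩
      · rintro ⟨w, hw, hser⟩
        obtain ⟨w', hw'⟩ := isLca_exists t hvalt hndt hut hyt hyu
        have : w = w' := isLca_unique _ hval hnd hw (isLca_lift htT hw')
        exact ⟨w', hw', this ▸ hser⟩
    · obtain ⟨s, hs, hys⟩ := mem_child_of_mem_leaves hy
      have hst : s ≠ t := fun h => hyt (h ▸ hys)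
      have hroot := isLca_root hval hnd ht hs hst hut hys
      rw [hsib s hs hst y hys]
      constructor
      · intro hb
        exact ⟨_, hroot, by rw [isSeries_node_iff]; exact hb⟩
      · rintro ⟨w, hw, hser⟩
        have : w = Cotree.node b ts := isLca_unique _ hval hnd hw hroot
        subst this
        exact isSeries_node_iff.1 hser

/-- restriction of an insertion node into the child that contains it -/
lemma insertion_restrict {b : Bool} {ts : List (Cotree V)} {Nx : Set V}
    (hval : (Cotree.node b ts).valid) (hnd : (Cotree.node b ts).leaves.Nodup)
    {t : Cotree V} (ht : t ∈ ts) {u : Cotree V} (hut : u ∈ t.subtrees)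
    (hins : IsInsertionNode (Cotree.node b ts) Nx u) :
    IsInsertionNode t (restrN Nx t) u ∧
      ∀ s ∈ ts, s ≠ t → ∀ y ∈ s.leaves, (y ∈ Nx ↔ b = true) := by
  obtain ⟨huT, hmixu, hunif, hcond⟩ := hins
  have htT : t ∈ (Cotree.node b ts).subtrees :=
    mem_subtrees_node.2 (Or.inr ⟨t, ht, self_mem_subtrees t⟩)
  have hul : ∀ v ∈ u.leaves, v ∈ t.leaves := leaves_subset_of_mem_subtrees t hut
  have hvalt : t.valid := ((valid_node_iff.1 hval).2 t ht).1
  have hndt : t.leaves.Nodup := nodup_leaves_of_mem_subtrees _ hnd htT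
  have hsib : ∀ s ∈ ts, s ≠ t → ∀ y ∈ s.leaves, (y ∈ Nx ↔ b = true) := by
    intro s hs hst y hys
    have hyu : y ∉ u.leaves := fun h =>
      leaves_disjoint hnd hs ht hst y hys (hul y h)
    have hroot := isLca_root hval hnd ht hs hst hut hys
    rw [hcond y (leaves_subset_child hs y hys) hyu]
    constructor
    · rintro ⟨w, hw, hser⟩
      have : w = Cotree.node b ts := isLca_unique _ hval hnd hw hroot
      subst this
      exact isSeries_node_iff.1 hser
    · intro hb
      exact ⟨_, hroot, by rw [isSeries_node_iff]; exact hb⟩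
  refine ⟨⟨hut, ?_, ?_, ?_⟩, hsib⟩
  · exact (mixed_congr (fun v hv => (mem_restrN_iff (hul v hv)))).2 hmixu
  · intro c hc
    have hcl : ∀ v ∈ c.leaves, v ∈ t.leaves := fun v hv =>
      hul v (leaves_subset_of_mem_subtrees u (mem_subtrees_of_mem_children hc) v hv)
    exact (uniform_congr (fun v hv => (mem_restrN_iff (hcl v hv)))).2 (hunif c hc)
  · intro y hyt hyu
    rw [mem_restrN_iff hyt, hcond y (leaves_subset_child ht y hyt) hyu]
    constructor
    · rintro ⟨w, hw, hser⟩
      obtain ⟨w', hw'⟩ := isLca_exists t hvalt hndt hut hyt hyu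
      have : w = w' := isLca_unique _ hval hnd hw (isLca_lift htT hw')
      exact ⟨w', hw', this ▸ hser⟩
    · rintro ⟨w, hw, hser⟩
      exact ⟨w, isLca_lift htT hw, hser⟩

end Cotree

namespace Cotree
variable {V : Type u}

lemma forward : ∀ (T : Cotree V) (Nx : Set V), T.valid → T.leaves.Nodup →
    (∀ v ∈ Nx, v ∈ T.leaves) → mixed Nx T → IsCograph (graphPlus T Nx) →
    ∃ u : Cotree V, IsInsertionNode T Nx u := by
  intro T
  induction T using ind with
  | hleaf v =>
    intro Nx _ _ _ hmix _
    exact absurd hmix (not_mixed_leaf v)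
  | hnode b ts ih =>
    intro Nx hval hnd hNx hmix hcog
    by_cases hall : ∀ c ∈ ts, uniform Nx c
    · refine ⟨Cotree.node b ts, self_mem_subtrees _, hmix, ?_, ?_⟩
      · intro c hc
        rw [children] at hc
        exact hall c hc
      · intro y hy hyn
        exact absurd hy hyn
    · push_neg at hall
      obtain ⟨t, ht, hmixt⟩ := hall
      have hsib : ∀ s ∈ ts, s ≠ t → ∀ y ∈ s.leaves, (y ∈ Nx ↔ b = true) := by
        intro s hs hst y hys
        cases b with
        | true =>
          simp only [iff_true]
          by_contra hyN
          exact not_cograph_A hval hnd ht hs hst hmixt hys hyN hcog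
        | false =>
          simp only [Bool.false_eq_true, iff_false]
          intro hyN
          exact not_cograph_B hval hnd ht hs hst hmixt hys hyN hcog
      have hvalt : t.valid := ((valid_node_iff.1 hval).2 t ht).1
      have hndt : t.leaves.Nodup := nodup_leaves_of_mem_subtrees _ hnd
        (mem_subtrees_node.2 (Or.inr ⟨t, ht, self_mem_subtrees t⟩))
      have hmixt' : mixed (restrN Nx t) t :=
        (mixed_congr (fun v hv => (mem_restrN_iff hv))).2 hmixt
      obtain ⟨u, hu⟩ := ih t ht (restrN Nx t) hvalt hndt restrN_subset hmixt'
        (isCograph_restrict hnd ht hcog)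
      exact ⟨u, insertion_lift hval hnd ht hsib hu⟩

end Cotree

namespace Cotree
variable {V : Type u}

lemma backward : ∀ (T : Cotree V) (Nx : Set V), T.valid → T.leaves.Nodup →
    (∀ v ∈ Nx, v ∈ T.leaves) → (∃ u : Cotree V, IsInsertionNode T Nx u) →
    IsCograph (graphPlus T Nx) := by
  intro T
  induction T using ind with
  | hleaf v =>
    rintro Nx _ _ _ ⟨u, hu⟩
    have h1 := hu.1
    rw [subtrees] at h1
    simp at h1
    subst h1
    exact absurd hu.2.1 (not_mixed_leaf v)
  | hnode b ts ih =>
    rintro Nx hval hnd hNx ⟨u, huT, hmixu, hunif, hcond⟩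
    rcases mem_subtrees_node.1 huT with rfl | ⟨t, ht, hut⟩
    · -- the insertion node is the root: all children uniform
      have hunif' : ∀ c ∈ ts, uniform Nx c := fun c hc => hunif c (by rw [children]; exact hc)
      rintro ⟨f, hinj, hf⟩
      have classify := p4_vertex_classify hNx hf
      have hNfull : ∀ v, v ∈ Nx → ∀ w ∈ (Cotree.node b ts).leaves, w ∉ Nx →
          ∃ cv cw, cv ∈ ts ∧ cw ∈ ts ∧ cv ≠ cw ∧ v ∈ cv.leaves ∧ w ∈ cw.leaves := by
        intro v hv w hw hwN
        obtain ⟨cv, hcv, hvcv⟩ := mem_child_of_mem_leaves (hNx v hv)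
        obtain ⟨cw, hcw, hwcw⟩ := mem_child_of_mem_leaves hw
        refine ⟨cv, cw, hcv, hcw, ?_, hvcv, hwcw⟩
        intro he
        subst he
        rcases hunif' cv hcv with hfull | hholl
        · exact hwN (hfull w hwcw)
        · exact hholl v hvcv hv
      by_cases hnone : ∃ n, f n = none
      · obtain ⟨n, hn⟩ := hnone
        have hsome : ∀ j : Fin 4, j ≠ n → ∃ v, f j = some v ∧ v ∈ (Cotree.node b ts).leaves := by
          intro j hj
          rcases classify j with h | h
          · exact absurd (hinj (h.trans hn.symm)) hj
          · exact h
        cases b with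
        | true =>
          have cross : ∀ i j : Fin 4, ∀ v w, f i = some v → f j = some w → v ∈ Nx →
              w ∈ (Cotree.node true ts).leaves → w ∉ Nx →
              (graphPlus (Cotree.node true ts) Nx).Adj (f i) (f j) := by
            intro i j v w hfi hfj hvN hwL hwN
            obtain ⟨cv, cw, hcv, hcw, hne, hvcv, hwcw⟩ := hNfull v hvN w hwL hwN
            rw [hfi, hfj]
            exact plus_adj_some_some.2 ⟨fun he => hwN (he ▸ hvN),
              adj_cross_series hcv hcw hne hvcv hwcw⟩
          have main : ∀ i j : Fin 4, ¬((i : ℕ) + 1 = j ∨ (j : ℕ) + 1 = i) →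
              ((i : ℕ) + 1 = n ∨ (n : ℕ) + 1 = i) → ¬((j : ℕ) + 1 = n ∨ (n : ℕ) + 1 = j) →
              j ≠ n → i ≠ n → False := by
            intro i j hnon hi hj hjn hin
            obtain ⟨vi, hvi, hviL⟩ := hsome i hin
            obtain ⟨vj, hvj, hvjL⟩ := hsome j hjn
            have hiN : vi ∈ Nx := by
              have := (hf n i).2 (Or.symm hi)
              rw [hn, hvi, plus_adj_none_some] at this
              exact this
            have hjN : vj ∉ Nx := by
              intro hmem
              exact hj (Or.symm ((hf n j).1 (by rw [hn, hvj]; exact plus_adj_none_some.2 hmem)))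
            exact hnon ((hf i j).1 (cross i j vi vj hvi hvj hiN hvjL hjN))
          obtain ⟨i, j, h1, h2, h3, h4, h5⟩ := pick_aux n
          exact main i j h1 h2 h3 h4 h5
        | false =>
          set P : Fin 4 → Prop := fun i => f i = none ∨ ∃ v, f i = some v ∧ v ∈ Nx with hP
          have crossn : ∀ i j : Fin 4, P i → ¬ P j →
              ¬ (graphPlus (Cotree.node false ts) Nx).Adj (f i) (f j) := by
            intro i j hPi hPj hadj
            rcases classify j with hj | ⟨w, hfj, hwL⟩
            · exact hPj (Or.inl hj)
            · by_cases hwN : w ∈ Nx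
              · exact hPj (Or.inr ⟨w, hfj, hwN⟩)
              · rcases hPi with hfi | ⟨v, hfi, hvN⟩
                · rw [hfi, hfj, plus_adj_none_some] at hadj
                  exact hwN hadj
                · rw [hfi, hfj, plus_adj_some_some] at hadj
                  obtain ⟨cv, cw, hcv, hcw, hne, hvcv, hwcw⟩ := hNfull v hvN w hwL hwN
                  exact not_adj_cross_parallel hnd hcv hcw hne hvcv hwcw hadj.2
          have same : ∀ i j : Fin 4, ((i : ℕ) + 1 = j ∨ (j : ℕ) + 1 = i) → (P i ↔ P j) := by
            intro i j hc
            constructor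
            · intro h
              by_contra h'
              exact crossn i j h h' ((hf i j).2 hc)
            · intro h
              by_contra h'
              exact crossn j i h h' ((hf j i).2 (Or.symm hc))
          have hPn : P n := Or.inl hn
          have hall : ∀ i, P i := fun i =>
            chain4 (same 0 1 (by decide)) (same 1 2 (by decide)) (same 2 3 (by decide)) n i hPn
          have main2 : ∀ m : Fin 4, m ≠ n → ¬((m : ℕ) + 1 = n ∨ (n : ℕ) + 1 = m) → False := by
            intro m hmn hcon
            rcases hall m with hfm | ⟨v, hfm, hvN⟩
            · exact hmn (hinj (hfm.trans hn.symm))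
            · exact hcon (Or.symm ((hf n m).1 (by rw [hn, hfm]; exact plus_adj_none_some.2 hvN)))
          obtain ⟨m, hm1, hm2⟩ := pick_aux2 n
          exact main2 m hm1 hm2
      · push_neg at hnone
        refine no_p4_allsome hnd hinj hf (fun i => ?_)
        cases hfi : f i with
        | none => exact absurd hfi (hnone i)
        | some v => exact ⟨v, rfl⟩
    · -- the insertion node is inside child t
      obtain ⟨hins_t, hsib⟩ := insertion_restrict hval hnd ht hut ⟨huT, hmixu, hunif, hcond⟩
      have hvalt : t.valid := ((valid_node_iff.1 hval).2 t ht).1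
      have hndt : t.leaves.Nodup := nodup_leaves_of_mem_subtrees _ hnd
        (mem_subtrees_node.2 (Or.inr ⟨t, ht, self_mem_subtrees t⟩))
      have hcogt : IsCograph (graphPlus t (restrN Nx t)) :=
        ih t ht (restrN Nx t) hvalt hndt restrN_subset ⟨u, hins_t⟩
      rintro ⟨f, hinj, hf⟩
      have classify := p4_vertex_classify hNx hf
      have total : ∀ i : Fin 4, InReg t (f i) ∨
          ∃ v s, s ∈ ts ∧ s ≠ t ∧ f i = some v ∧ v ∈ s.leaves := by
        intro i
        rcases classify i with h | ⟨v, hfi, hvL⟩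
        · exact Or.inl (Or.inl h)
        · obtain ⟨cv, hcv, hvc⟩ := mem_child_of_mem_leaves hvL
          by_cases he : cv = t
          · exact Or.inl (Or.inr ⟨v, hfi, he ▸ hvc⟩)
          · exact Or.inr ⟨v, cv, hcv, he, hfi, hvc⟩
      have transfer : (∀ i, InReg t (f i)) → False := by
        intro hA
        refine hcogt ⟨f, hinj, fun i j => ?_⟩
        rw [← plus_adj_restrict hnd ht (hA i) (hA j)]
        exact hf i j
      have allsome : (∀ i, ¬ InReg t (f i)) → False := by
        intro hA
        refine no_p4_allsome hnd hinj hf (fun i => ?_)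
        rcases total i with h | ⟨v, s, _, _, hfi, _⟩
        · exact absurd h (hA i)
        · exact ⟨v, hfi⟩
      cases b with
      | true =>
        have cross : ∀ i j : Fin 4, ¬ InReg t (f i) → InReg t (f j) →
            (graphPlus (Cotree.node true ts) Nx).Adj (f i) (f j) := by
          intro i j hAi hAj
          rcases total i with h | ⟨v, s, hs, hst, hfi, hvs⟩
          · exact absurd h hAi
          · have hvN : v ∈ Nx := (hsib s hs hst v hvs).2 rfl
            rcases hAj with hj | ⟨w, hfj, hw⟩
            · rw [hfi, hj]
              exact plus_adj_some_none.2 hvN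
            · rw [hfi, hfj]
              exact plus_adj_some_some.2
                ⟨fun he => leaves_disjoint hnd hs ht hst v hvs (he ▸ hw),
                 adj_cross_series hs ht hst hvs hw⟩
        have same : ∀ i j : Fin 4, ¬((i : ℕ) + 1 = j ∨ (j : ℕ) + 1 = i) →
            (InReg t (f i) ↔ InReg t (f j)) := by
          intro i j hc
          constructor
          · intro h
            by_contra h'
            exact hc ((hf j i).1 (cross j i h' h) |> Or.symm)
          · intro h
            by_contra h'
            exact hc ((hf i j).1 (cross i j h' h))
        have hchain := chain4' (P := fun i => InReg t (f i)) (same 0 2 (by decide)) (same 0 3 (by decide)) (same 1 3 (by decide))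
        by_cases hA0 : InReg t (f 0)
        · exact transfer (fun i => hchain 0 i hA0)
        · exact allsome (fun i hi => hA0 (hchain i 0 hi))
      | false =>
        have cross : ∀ i j : Fin 4, ¬ InReg t (f i) → InReg t (f j) →
            ¬ (graphPlus (Cotree.node false ts) Nx).Adj (f i) (f j) := by
          intro i j hAi hAj hadj
          rcases total i with h | ⟨v, s, hs, hst, hfi, hvs⟩
          · exact absurd h hAi
          · have hvN : v ∉ Nx := fun h => by simpa using (hsib s hs hst v hvs).1 h
            rcases hAj with hj | ⟨w, hfj, hw⟩
            · rw [hfi, hj] at hadj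
              exact hvN (plus_adj_some_none.1 hadj)
            · rw [hfi, hfj] at hadj
              exact not_adj_cross_parallel hnd hs ht hst hvs hw (plus_adj_some_some.1 hadj).2
        have same : ∀ i j : Fin 4, ((i : ℕ) + 1 = j ∨ (j : ℕ) + 1 = i) →
            (InReg t (f i) ↔ InReg t (f j)) := by
          intro i j hc
          constructor
          · intro h
            by_contra h'
            exact cross j i h' h ((hf j i).2 (Or.symm hc))
          · intro h
            by_contra h'
            exact cross i j h' h ((hf i j).2 hc)
        have hchain := chain4 (P := fun i => InReg t (f i)) (same 0 1 (by decide)) (same 1 2 (by decide)) (same 2 3 (by decide))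
        by_cases hA0 : InReg t (f 0)
        · exact transfer (fun i => hchain 0 i hA0)
        · exact allsome (fun i hi => hA0 (hchain i 0 hi))

end Cotree


theorem stmt_6 {V : Type u} (T : Cotree V) (Nx : Set V)
    (hval : T.valid) (hnd : T.leaves.Nodup)
    (hNx : ∀ v ∈ Nx, v ∈ T.leaves) (hmix : Cotree.mixed Nx T) :
    IsCograph (Cotree.graphPlus T Nx) ↔ ∃ u : Cotree V, Cotree.IsInsertionNode T Nx u := by
  constructor
  · exact fun h => Cotree.forward T Nx hval hnd hNx hmix h
  · exact fun h => Cotree.backward T Nx hval hnd hNx h
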